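/- Let λ, R > 0 and suppose s ∈ [R + π/(4λ), R + π/(2λ)] satisfies τ(s) ≥ (1 - 4λ(R + π/(2λ)))s² + 4λs³, where τ(s) = s²(1 - 1/tan²(λ(s-R))). Then s ≤ R + (1/λ)(π/2 - (1/4)(1 - τ(s)/(R + π/(4λ))²)). -/

import Mathlib

/-- If `s ∈ [R + π/(4λ), R + π/(2λ)]` satisfies
`τ(s) ≥ (1 - 4λ(R + π/(2λ)))s² + 4λs³` with `τ(s) = s²(1 - 1/tan²(λ(s-R)))`, then
`s ≤ R + (1/λ)(π/2 - (1/4)(1 - τ(s)/(R + π/(4λ))²))`. -/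
theorem s_upper_bound (lam R s : ℝ) (hlam : 0 < lam) (hR : 0 < R)
    (hs : s ∈ Set.Icc (R + Real.pi / (4 * lam)) (R + Real.pi / (2 * lam)))
    (htau : (1 - 4 * lam * (R + Real.pi / (2 * lam))) * s ^ 2 + 4 * lam * s ^ 3 ≤
      s ^ 2 * (1 - 1 / Real.tan (lam * (s - R)) ^ 2)) :
    s ≤ R + (1 / lam) * (Real.pi / 2 -
      (1 / 4) * (1 - s ^ 2 * (1 - 1 / Real.tan (lam * (s - R)) ^ 2) /
        (R + Real.pi / (4 * lam)) ^ 2)) := by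
  obtain ⟨hs1, hs2⟩ := hs
  have hpi := Real.pi_pos
  have hA : 0 < R + Real.pi / (4 * lam) := by positivity
  have hsp : 0 < s := lt_of_lt_of_le hA hs1
  set θ := lam * (s - R) with hθdef
  have hθ1 : Real.pi / 4 ≤ θ := by
    have : Real.pi / (4 * lam) ≤ s - R := by linarith
    have := mul_le_mul_of_nonneg_left this hlam.le
    rw [hθdef]
    calc Real.pi / 4 = lam * (Real.pi / (4 * lam)) := by field_simp
    _ ≤ lam * (s - R) := this
  have hθ2 : θ ≤ Real.pi / 2 := by
    have : s - R ≤ Real.pi / (2 * lam) := by linarith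
    have := mul_le_mul_of_nonneg_left this hlam.le
    rw [hθdef]
    calc lam * (s - R) ≤ lam * (Real.pi / (2 * lam)) := this
    _ = Real.pi / 2 := by field_simp
  set T := 1 - 1 / Real.tan θ ^ 2 with hT
  have hT0 : 0 ≤ T := by
    rcases eq_or_lt_of_le hθ2 with h | h
    · rw [hT, h, Real.tan_pi_div_two]; norm_num
    · have h1 : (1:ℝ) ≤ Real.tan θ := by
        rcases eq_or_lt_of_le hθ1 with h' | h'
        · rw [← h', Real.tan_pi_div_four]
        · have := Real.tan_lt_tan_of_nonneg_of_lt_pi_div_two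
            (by positivity : (0:ℝ) ≤ Real.pi / 4) h h'
          rw [Real.tan_pi_div_four] at this
          linarith
      have h2 : (1:ℝ) ≤ Real.tan θ ^ 2 := by nlinarith
      have : 1 / Real.tan θ ^ 2 ≤ 1 := by
        rw [div_le_one (by nlinarith : (0:ℝ) < Real.tan θ ^ 2)]; exact h2
      rw [hT]; linarith
  -- From htau : T ≥ 1 + 4λ(s-R) - 2π after dividing by s²
  have hB : 4 * lam * (R + Real.pi / (2 * lam)) = 4 * lam * R + 2 * Real.pi := by
    field_simp; ring
  have hTlb : 1 + 4 * lam * (s - R) - 2 * Real.pi ≤ T := by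
    have h1 : s ^ 2 * (1 + 4 * lam * (s - R) - 2 * Real.pi) ≤ s ^ 2 * T := by
      calc s ^ 2 * (1 + 4 * lam * (s - R) - 2 * Real.pi)
          = (1 - (4 * lam * R + 2 * Real.pi)) * s ^ 2 + 4 * lam * s ^ 3 := by ring
        _ = (1 - 4 * lam * (R + Real.pi / (2 * lam))) * s ^ 2 + 4 * lam * s ^ 3 := by
            rw [hB]
        _ ≤ s ^ 2 * T := htau
    exact le_of_mul_le_mul_left h1 (by positivity)
  have hs2A : (R + Real.pi / (4 * lam)) ^ 2 ≤ s ^ 2 := by nlinarith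
  have hkey : T ≤ s ^ 2 * T / (R + Real.pi / (4 * lam)) ^ 2 := by
    rw [le_div_iff₀ (by positivity)]
    nlinarith [mul_le_mul_of_nonneg_right hs2A hT0]
  have hgoal : 1 + 4 * lam * (s - R) - 2 * Real.pi ≤
      s ^ 2 * T / (R + Real.pi / (4 * lam)) ^ 2 := le_trans hTlb hkey
  rw [← sub_nonneg]
  have heq : R + 1 / lam * (Real.pi / 2 -
      1 / 4 * (1 - s ^ 2 * T / (R + Real.pi / (4 * lam)) ^ 2)) - s
      = (s ^ 2 * T / (R + Real.pi / (4 * lam)) ^ 2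
          - (1 + 4 * lam * (s - R) - 2 * Real.pi)) / (4 * lam) := by
    field_simp
    ring
  rw [heq]
  apply div_nonneg _ (by positivity)
  linarith
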